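/- For every λ ∈ [0,1], the max-relative entropy of entanglement of the qubit amplitude damping channel satisfies E_max(N^ad_λ) = log₂(2−λ). -/

import Mathlib

open scoped Kronecker ComplexOrder
open Matrix

noncomputable section

/-- A density matrix: positive semidefinite with unit trace. -/
def IsDensity {n : Type*} [Fintype n] (M : Matrix n n ℂ) : Prop :=
  M.PosSemidef ∧ M.trace = 1

/-- A bipartite density matrix is separable if it is a finite convex combination of
Kronecker products of density matrices on the two factors. -/
def SepState {m k : Type*} [Fintype m] [Fintype k]
    (M : Matrix (m × k) (m × k) ℂ) : Prop :=
  ∃ (L : ℕ) (p : Fin L → ℝ) (P : Fin L → Matrix m m ℂ) (Q : Fin L → Matrix k k ℂ),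
    (∀ i, 0 ≤ p i) ∧ (∑ i, p i) = 1 ∧ (∀ i, IsDensity (P i)) ∧ (∀ i, IsDensity (Q i)) ∧
    M = ∑ i, ((p i : ℂ) • (P i ⊗ₖ Q i))

/-- Max-relative entropy `D_max(ρ‖σ) = inf {x : 2^x • σ - ρ ⪰ 0}`, `+∞` if no such `x`. -/
def Dmax {n : Type*} [Fintype n] (ρ σ : Matrix n n ℂ) : EReal :=
  sInf {x : EReal | ∃ r : ℝ, x = (r : EReal) ∧ (((2:ℝ) ^ r) • σ - ρ).PosSemidef}

/-- The extension `id ⊗ T` of a map on matrices to a bipartite system. -/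
def idTensorFun {n d d' : Type*} (T : Matrix d d ℂ → Matrix d' d' ℂ)
    (M : Matrix (n × d) (n × d) ℂ) : Matrix (n × d') (n × d') ℂ :=
  Matrix.of fun p q => T (Matrix.of fun a b => M (p.1, a) (q.1, b)) p.2 q.2

/-- The maximally entangled state `ψ_d = (1/d) ∑_{i,j} |ii⟩⟨jj|`. -/
def maxEnt (d : ℕ) : Matrix (Fin d × Fin d) (Fin d × Fin d) ℂ :=
  Matrix.of fun p q => if p.1 = p.2 ∧ q.1 = q.2 then (1 / (d:ℂ)) else 0

/-- Trace preservation for a linear map on matrices. -/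
def IsTracePreserving {d d' : ℕ}
    (N : Matrix (Fin d) (Fin d) ℂ →ₗ[ℂ] Matrix (Fin d') (Fin d') ℂ) : Prop :=
  ∀ M, (N M).trace = M.trace

/-- Complete positivity: `id_n ⊗ N` maps positive semidefinite matrices to positive
semidefinite matrices, for every finite ancilla dimension `n`. -/
def IsCompletelyPositive {d d' : ℕ}
    (N : Matrix (Fin d) (Fin d) ℂ →ₗ[ℂ] Matrix (Fin d') (Fin d') ℂ) : Prop :=
  ∀ (n : ℕ) (M : Matrix (Fin n × Fin d) (Fin n × Fin d) ℂ),
    M.PosSemidef → (idTensorFun (⇑N) M).PosSemidef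

/-- Max-relative entropy of entanglement of a channel: supremum over all finite ancilla
dimensions `n ≥ 1` and input states `ρ` of the infimum over separable states `σ` of
`D_max((id_n ⊗ N)(ρ) ‖ σ)`. -/
def EmaxChannel {d d' : ℕ}
    (N : Matrix (Fin d) (Fin d) ℂ →ₗ[ℂ] Matrix (Fin d') (Fin d') ℂ) : EReal :=
  sSup {x : EReal | ∃ n : ℕ, 0 < n ∧ ∃ ρ : Matrix (Fin n × Fin d) (Fin n × Fin d) ℂ,
    IsDensity ρ ∧
    x = sInf {y : EReal | ∃ σ : Matrix (Fin n × Fin d') (Fin n × Fin d') ℂ,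
      IsDensity σ ∧ SepState σ ∧ y = Dmax (idTensorFun (⇑N) ρ) σ}}

/-- The linear map `ρ ↦ M₁ ρ M₁† + M₂ ρ M₂†` given by two Kraus operators. -/
def krausMap2 (M₁ M₂ : Matrix (Fin 2) (Fin 2) ℂ) :
    Matrix (Fin 2) (Fin 2) ℂ →ₗ[ℂ] Matrix (Fin 2) (Fin 2) ℂ where
  toFun ρ := M₁ * ρ * M₁ᴴ + M₂ * ρ * M₂ᴴ
  map_add' x y := by
    simp only [mul_add, add_mul]
    abel
  map_smul' c x := by
    simp only [RingHom.id_apply]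
    simp [mul_smul_comm, smul_mul_assoc, smul_add]

/-- The qubit amplitude damping channel with damping parameter `l`. -/
def adChannel (l : ℝ) : Matrix (Fin 2) (Fin 2) ℂ →ₗ[ℂ] Matrix (Fin 2) (Fin 2) ℂ :=
  krausMap2 !![(1:ℂ), 0; 0, ((Real.sqrt (1 - l) : ℝ) : ℂ)]
            !![0, ((Real.sqrt l : ℝ) : ℂ); 0, 0]

/-- The max-relative entropy of entanglement of the qubit amplitude
damping channel equals `log₂(2−λ)`. -/


def outer {m : Type*} (v : m → ℂ) : Matrix m m ℂ := Matrix.of fun i j => v i * star (v j)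

lemma outer_posSemidef {m : Type*} [Fintype m] (v : m → ℂ) : (outer v).PosSemidef := by
  refine Matrix.PosSemidef.of_dotProduct_mulVec_nonneg ?_ ?_
  · ext i j
    simp [outer, conjTranspose_apply, mul_comm]
  · intro x
    have : dotProduct (star x) ((outer v) *ᵥ x) =
        (∑ i, star (x i) * v i) * star (∑ i, star (x i) * v i) := by
      simp [dotProduct, mulVec, outer, Finset.sum_mul, Finset.mul_sum]
      rw [Finset.sum_comm]
      congr 1; ext i; congr 1; ext j; ring
    rw [this]
    exact mul_star_self_nonneg _

lemma outer_trace {m : Type*} [Fintype m] (v : m → ℂ) :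
    (outer v).trace = ∑ i, v i * star (v i) := by
  simp [outer, Matrix.trace, Matrix.diag]

lemma smul_posSemidef {m : Type*} [Fintype m] {M : Matrix m m ℂ} (hM : M.PosSemidef)
    {c : ℝ} (hc : 0 ≤ c) : ((c : ℂ) • M).PosSemidef := by
  refine Matrix.PosSemidef.of_dotProduct_mulVec_nonneg ?_ ?_
  · ext i j
    simpa [conjTranspose_apply, hM.1.apply] using (hM.1.apply j i).symm ▸ rfl
  · intro x
    simp only [Matrix.smul_mulVec, dotProduct_smul, smul_eq_mul]
    exact mul_nonneg (by exact_mod_cast hc) (hM.dotProduct_mulVec_nonneg x)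

lemma psd_exists_ct_mul {m : Type*} [Fintype m] [DecidableEq m] {A : Matrix m m ℂ}
    (hA : A.PosSemidef) : ∃ B : Matrix m m ℂ, A = Bᴴ * B := by
  open scoped MatrixOrder in
  obtain ⟨X, hX, -, hXA⟩ :=
    CFC.exists_sqrt_of_isSelfAdjoint_of_quasispectrumRestricts hA.isHermitian
      (QuasispectrumRestricts.nnreal_of_nonneg hA.nonneg)
  exact ⟨X, hXA.symm.trans (congrArg (· * X) hX.symm)⟩

lemma kron_posSemidef {m k : Type*} [Fintype m] [Fintype k] [DecidableEq m] [DecidableEq k]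
    {A : Matrix m m ℂ} {B : Matrix k k ℂ} (hA : A.PosSemidef) (hB : B.PosSemidef) :
    (A ⊗ₖ B).PosSemidef := by
  obtain ⟨X, rfl⟩ := psd_exists_ct_mul hA
  obtain ⟨Y, rfl⟩ := psd_exists_ct_mul hB
  have hk : (Xᴴ * X) ⊗ₖ (Yᴴ * Y) = (X ⊗ₖ Y)ᴴ * (X ⊗ₖ Y) := by
    rw [Matrix.mul_kronecker_mul]
    congr 1
    ext ⟨i, j⟩ ⟨p, q⟩
    simp [conjTranspose_apply]
  rw [hk]
  exact Matrix.posSemidef_conjTranspose_mul_self _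

lemma psd_diag_nonneg {m : Type*} [Fintype m] [DecidableEq m] {M : Matrix m m ℂ}
    (hM : M.PosSemidef) (i : m) : 0 ≤ M i i := by
  have := hM.dotProduct_mulVec_nonneg (Pi.single i 1)
  simpa [dotProduct, mulVec, Pi.single_apply] using this

lemma psd_diag_re {m : Type*} [Fintype m] [DecidableEq m] {M : Matrix m m ℂ}
    (hM : M.PosSemidef) (i : m) : M i i = ((M i i).re : ℂ) := by
  have h := psd_diag_nonneg hM i
  rw [Complex.le_def] at h
  apply Complex.ext
  · simp
  · simp [← h.2]

lemma psd_trace_re {m : Type*} [Fintype m] [DecidableEq m] {M : Matrix m m ℂ}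
    (hM : M.PosSemidef) : M.trace = ((M.trace.re : ℝ) : ℂ) ∧ 0 ≤ M.trace.re := by
  constructor
  · rw [Matrix.trace]
    push_cast
    rw [Complex.re_sum]
    push_cast
    apply Finset.sum_congr rfl
    intro i _
    exact psd_diag_re hM i
  · rw [Matrix.trace, Complex.re_sum]
    apply Finset.sum_nonneg
    intro i _
    have := psd_diag_nonneg hM i
    rw [Complex.le_def] at this
    simpa using this.1

lemma psd_trace_zero {m : Type*} [Fintype m] [DecidableEq m] {M : Matrix m m ℂ}
    (hM : M.PosSemidef) (h : M.trace = 0) : M = 0 := by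
  obtain ⟨B, rfl⟩ := psd_exists_ct_mul hM
  have hent : ∀ i j, B i j = 0 := by
    have htr : (Bᴴ * B).trace = ∑ j, ∑ i, ((Complex.normSq (B i j) : ℝ) : ℂ) := by
      simp [Matrix.trace, Matrix.diag, Matrix.mul_apply, conjTranspose_apply,
        Complex.normSq_eq_conj_mul_self]
    rw [htr] at h
    have h2 : (∑ j, ∑ i, Complex.normSq (B i j)) = 0 := by
      have := congrArg Complex.re h
      simpa [Complex.re_sum] using this
    intro i j
    have hnn : ∀ j ∈ Finset.univ, 0 ≤ ∑ i, Complex.normSq (B i j) :=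
      fun j _ => Finset.sum_nonneg fun i _ => Complex.normSq_nonneg _
    have h3 := (Finset.sum_eq_zero_iff_of_nonneg hnn).mp h2 j (Finset.mem_univ j)
    have h4 := (Finset.sum_eq_zero_iff_of_nonneg
      (fun i _ => Complex.normSq_nonneg (B i j))).mp h3 i (Finset.mem_univ i)
    exact Complex.normSq_eq_zero.mp h4
  have : B = 0 := by ext i j; exact hent i j
  rw [this]; simp

def Bmat (n : ℕ) (u : Fin 2 → ℂ) : Matrix (Fin n) (Fin n × Fin 2) ℂ :=
  Matrix.of fun i p => if p.1 = i then u p.2 else 0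

lemma Bmat_sandwich {n : ℕ} (u : Fin 2 → ℂ) (ρ : Matrix (Fin n × Fin 2) (Fin n × Fin 2) ℂ)
    (i j : Fin n) :
    (Bmat n u * ρ * (Bmat n u)ᴴ) i j = ∑ k, ∑ l, u k * star (u l) * ρ (i, k) (j, l) := by
  simp only [Matrix.mul_apply, conjTranspose_apply, Bmat, Matrix.of_apply,
    Fintype.sum_prod_type]
  simp [apply_ite (starRingEnd ℂ), mul_ite, ite_mul, Finset.sum_ite_eq, Finset.sum_ite_eq',
    Finset.mul_sum, Finset.sum_mul, mul_comm, mul_assoc, mul_left_comm, add_mul]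
  ring

lemma kron_sandwich {n : ℕ} (A : Matrix (Fin 2) (Fin 2) ℂ)
    (ρ : Matrix (Fin n × Fin 2) (Fin n × Fin 2) ℂ) (i j : Fin n) (k l : Fin 2) :
    (((1 : Matrix (Fin n) (Fin n) ℂ) ⊗ₖ A) * ρ * ((1 : Matrix (Fin n) (Fin n) ℂ) ⊗ₖ A)ᴴ)
      (i, k) (j, l) = ∑ k', ∑ l', A k k' * star (A l l') * ρ (i, k') (j, l') := by
  simp only [Matrix.mul_apply, conjTranspose_apply, kroneckerMap_apply, Matrix.one_apply,
    Fintype.sum_prod_type]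
  simp [apply_ite (starRingEnd ℂ), mul_ite, ite_mul, Finset.sum_ite_eq, Finset.sum_ite_eq',
    Finset.mul_sum, Finset.sum_mul, mul_comm, mul_assoc, mul_left_comm, add_mul]
  ring



def aVec (j : Fin 4) : Fin 2 → ℂ := ![![1, 1], ![1, Complex.I], ![1, -1], ![1, -Complex.I]] j
def bVec (s : ℝ) (j : Fin 4) : Fin 2 → ℂ :=
  ![![1, (s:ℂ)], ![1, -(s:ℂ) * Complex.I], ![1, -(s:ℂ)], ![1, (s:ℂ) * Complex.I]] j
def K1 (s : ℝ) : Matrix (Fin 2) (Fin 2) ℂ := !![0, 0; (s : ℂ), 0]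
def K2 (s : ℝ) : Matrix (Fin 2) (Fin 2) ℂ := !![0, (s : ℂ); 0, 0]

set_option maxHeartbeats 1000000 in
lemma key22' (l s r : ℝ) (hs : ((s:ℝ):ℂ)^2 = 1 - (l:ℂ)) (hr : ((r:ℝ):ℂ)^2 = (l:ℂ))
    (X : Matrix (Fin 2) (Fin 2) ℂ) (k m : Fin 2) :
    (∑ j : Fin 4, ((1:ℂ)/4) *
      ((∑ k', ∑ l', aVec j k' * star (aVec j l') * X k' l') *
        (bVec s j k * star (bVec s j m))))
    = (!![(1:ℂ), 0; 0, ((s:ℝ):ℂ)] * X * !![(1:ℂ), 0; 0, ((s:ℝ):ℂ)]ᴴ +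
       !![0, ((r:ℝ):ℂ); 0, 0] * X * !![0, ((r:ℝ):ℂ); 0, 0]ᴴ) k m
      + (∑ k', ∑ l', K1 s k k' * star (K1 s m l') * X k' l')
      + (∑ k', ∑ l', K2 s k k' * star (K2 s m l') * X k' l') := by
  have hss : (starRingEnd ℂ) ((s:ℝ):ℂ) = ((s:ℝ):ℂ) := Complex.conj_ofReal _
  have hrs : (starRingEnd ℂ) ((r:ℝ):ℂ) = ((r:ℝ):ℂ) := Complex.conj_ofReal _
  fin_cases k <;> fin_cases m <;>
    simp only [Fin.sum_univ_four, Fin.sum_univ_two, aVec, bVec, K1, K2, Matrix.mul_apply,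
      Matrix.add_apply, conjTranspose_apply, Matrix.cons_val_zero, Matrix.cons_val_one,
      Matrix.head_cons, Fin.mk_zero, Fin.mk_one, Matrix.cons_val', Matrix.empty_val',
      Matrix.cons_val_fin_one, Matrix.of_apply,
      Matrix.cons_val_two, Matrix.cons_val_three, Matrix.vecHead, Matrix.vecTail,
      Function.comp_apply, Fin.succ_zero_eq_one, Fin.succ_one_eq_two] <;>
    simp only [star_one, star_mul', star_neg, Complex.star_def, Complex.conj_I, hss,
      hrs, Complex.I_mul_I, one_mul, mul_one, neg_neg, mul_zero, zero_mul,
      add_zero, zero_add, star_zero, neg_mul, mul_neg]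
  · linear_combination (-(X 1 1)) * hs + (-(X 1 1)) * hr
  · linear_combination ((X 1 0 - X 0 1) * (s:ℂ) / 2) * Complex.I_sq
  · linear_combination ((X 0 1 - X 1 0) * (s:ℂ) / 2) * Complex.I_sq
  · linear_combination (-(X 0 0 + X 1 1) * (s:ℂ)^2 / 2) * Complex.I_sq

set_option maxHeartbeats 1000000 in
lemma main_eq (l s r : ℝ) (hs : ((s:ℝ):ℂ)^2 = 1 - (l:ℂ)) (hr : ((r:ℝ):ℂ)^2 = (l:ℂ))
    (hsd : Real.sqrt (1 - l) = s) (hrd : Real.sqrt l = r) (n : ℕ)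
    (ρ : Matrix (Fin n × Fin 2) (Fin n × Fin 2) ℂ) :
    (∑ j : Fin 4, ((1:ℂ)/4) •
        ((Bmat n (aVec j) * ρ * (Bmat n (aVec j))ᴴ) ⊗ₖ Matrix.of
          (fun k m => bVec s j k * star (bVec s j m))))
      = idTensorFun (⇑(adChannel l)) ρ
        + ((1 : Matrix (Fin n) (Fin n) ℂ) ⊗ₖ K1 s) * ρ *
            ((1 : Matrix (Fin n) (Fin n) ℂ) ⊗ₖ K1 s)ᴴ
        + ((1 : Matrix (Fin n) (Fin n) ℂ) ⊗ₖ K2 s) * ρ *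
            ((1 : Matrix (Fin n) (Fin n) ℂ) ⊗ₖ K2 s)ᴴ := by
  ext ⟨i, k⟩ ⟨j, m⟩
  have h1 := key22' l s r hs hr (Matrix.of fun a b => ρ (i, a) (j, b)) k m
  simp only [Matrix.of_apply] at h1
  simp only [Matrix.sum_apply, Matrix.smul_apply, Matrix.add_apply, kroneckerMap_apply,
    Bmat_sandwich, kron_sandwich, idTensorFun, Matrix.of_apply, adChannel, krausMap2, hsd, hrd,
    LinearMap.coe_mk, AddHom.coe_mk, smul_eq_mul]
  convert h1 using 2
  rw [Matrix.add_apply]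


lemma trace_outer_bVec (l s : ℝ) (hs : ((s:ℝ):ℂ)^2 = 1 - (l:ℂ)) (j : Fin 4) :
    (outer (bVec s j)).trace = ((2 - l : ℝ) : ℂ) := by
  have hss : (starRingEnd ℂ) ((s:ℝ):ℂ) = ((s:ℝ):ℂ) := Complex.conj_ofReal _
  fin_cases j <;>
    simp [outer_trace, bVec, Fin.sum_univ_two, hss, Complex.conj_I, star_mul', mul_comm,
      mul_assoc, mul_left_comm] <;>
    push_cast <;>
    first
      | linear_combination hs
      | linear_combination hs + (-((s:ℂ)^2)) * Complex.I_sq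

set_option maxHeartbeats 1000000 in
lemma upperBound (l : ℝ) (hl : l ∈ Set.Icc (0:ℝ) 1) (n : ℕ) (hn : 0 < n)
    (ρ : Matrix (Fin n × Fin 2) (Fin n × Fin 2) ℂ) (hρ : IsDensity ρ) :
    ∃ σ : Matrix (Fin n × Fin 2) (Fin n × Fin 2) ℂ, IsDensity σ ∧ SepState σ ∧
      ((((2:ℝ) - l) • σ) - idTensorFun (⇑(adChannel l)) ρ).PosSemidef := by
  set s : ℝ := Real.sqrt (1 - l) with hsd
  set r : ℝ := Real.sqrt l with hrd
  have hs : ((s:ℝ):ℂ)^2 = 1 - (l:ℂ) := by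
    rw [hsd, ← Complex.ofReal_pow, Real.sq_sqrt (by linarith [hl.2])]; push_cast; ring
  have hr : ((r:ℝ):ℂ)^2 = (l:ℂ) := by
    rw [hrd, ← Complex.ofReal_pow, Real.sq_sqrt hl.1]
  have h2l : (0:ℝ) < 2 - l := by linarith [hl.2]
  set ρj : Fin 4 → Matrix (Fin n) (Fin n) ℂ :=
    fun j => Bmat n (aVec j) * ρ * (Bmat n (aVec j))ᴴ with hρj
  have hρjpsd : ∀ j, (ρj j).PosSemidef := fun j => hρ.1.mul_mul_conjTranspose_same _
  set τ : Fin 4 → ℝ := fun j => (ρj j).trace.re with hτ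
  have hτnn : ∀ j, 0 ≤ τ j := fun j => (psd_trace_re (hρjpsd j)).2
  have htrτ : ∀ j, (ρj j).trace = ((τ j : ℝ) : ℂ) := fun j => (psd_trace_re (hρjpsd j)).1
  -- sum of traces is 4
  have hsum : ∑ j : Fin 4, (ρj j).trace = 4 := by
    have h1 : ∀ j, (ρj j).trace = ∑ i, ∑ k, ∑ m, aVec j k * star (aVec j m) * ρ (i,k) (i,m) := by
      intro j
      simp [Matrix.trace, Matrix.diag, hρj, Bmat_sandwich]
    have h2 : ρ.trace = ∑ i : Fin n, (ρ (i,0) (i,0) + ρ (i,1) (i,1)) := by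
      simp [Matrix.trace, Matrix.diag, Fintype.sum_prod_type, Fin.sum_univ_two]
    calc ∑ j : Fin 4, (ρj j).trace
        = ∑ j : Fin 4, ∑ i, ∑ k, ∑ m, aVec j k * star (aVec j m) * ρ (i,k) (i,m) := by
          simp [h1]
      _ = ∑ i, ∑ j : Fin 4, ∑ k, ∑ m, aVec j k * star (aVec j m) * ρ (i,k) (i,m) :=
          Finset.sum_comm
      _ = ∑ i : Fin n, 4 * (ρ (i,0) (i,0) + ρ (i,1) (i,1)) := by
          apply Finset.sum_congr rfl
          intro i _
          simp [aVec, Fin.sum_univ_four, Fin.sum_univ_two, Complex.conj_I]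
          ring
      _ = 4 * ρ.trace := by rw [h2, Finset.mul_sum]
      _ = 4 := by rw [hρ.2, mul_one]
  have hτsum : ∑ j : Fin 4, τ j = 4 := by
    have := hsum
    simp only [htrτ] at this
    push_cast at this
    exact_mod_cast this
  -- the Q states
  set Q : Fin 4 → Matrix (Fin 2) (Fin 2) ℂ :=
    fun j => ((((2 - l)⁻¹ : ℝ)) : ℂ) • outer (bVec s j) with hQ
  have hQdens : ∀ j, IsDensity (Q j) := by
    intro j
    constructor
    · exact smul_posSemidef (outer_posSemidef _) (by positivity)
    · rw [hQ]
      simp only [Matrix.trace_smul, trace_outer_bVec l s hs j, smul_eq_mul]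
      rw [← Complex.ofReal_mul]
      norm_cast
      field_simp
  -- the P states
  set e0 : Fin n → ℂ := fun i => if i = ⟨0, hn⟩ then 1 else 0 with he0
  have hE : IsDensity (outer e0) := by
    constructor
    · exact outer_posSemidef _
    · rw [outer_trace]
      simp [he0, apply_ite]
  set P : Fin 4 → Matrix (Fin n) (Fin n) ℂ :=
    fun j => if (ρj j).trace = 0 then outer e0 else (((τ j)⁻¹ : ℝ) : ℂ) • ρj j with hP
  have hPdens : ∀ j, IsDensity (P j) := by
    intro j
    rw [hP]
    by_cases h : (ρj j).trace = 0
    · simp only [h, if_true]; exact hE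
    · simp only [h, if_false]
      have hτne : τ j ≠ 0 := by
        intro h0
        apply h
        rw [htrτ j, h0, Complex.ofReal_zero]
      constructor
      · exact smul_posSemidef (hρjpsd j) (inv_nonneg.mpr (hτnn j))
      · rw [Matrix.trace_smul, htrτ j, smul_eq_mul, ← Complex.ofReal_mul]
        rw [inv_mul_cancel₀ hτne, Complex.ofReal_one]
  set p : Fin 4 → ℝ := fun j => τ j / 4 with hp
  set σ : Matrix (Fin n × Fin 2) (Fin n × Fin 2) ℂ :=
    ∑ j : Fin 4, ((p j : ℝ) : ℂ) • (P j ⊗ₖ Q j) with hσ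
  have hpnn : ∀ j, 0 ≤ p j := fun j => by
    rw [hp]; exact div_nonneg (hτnn j) (by norm_num)
  have hpsum : ∑ j : Fin 4, p j = 1 := by
    rw [hp]
    rw [← Finset.sum_div, hτsum]
    norm_num
  refine ⟨σ, ?_, ?_, ?_⟩
  · constructor
    · rw [hσ]
      apply Finset.sum_induction _ _ (fun A B hA hB => hA.add hB) Matrix.PosSemidef.zero
      intro j _
      exact smul_posSemidef (kron_posSemidef (hPdens j).1 (hQdens j).1) (hpnn j)
    · rw [hσ]
      rw [Matrix.trace_sum]
      have : ∀ j : Fin 4, (((p j : ℝ) : ℂ) • (P j ⊗ₖ Q j)).trace = ((p j : ℝ) : ℂ) := by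
        intro j
        rw [Matrix.trace_smul, Matrix.trace_kronecker, (hPdens j).2, (hQdens j).2]
        simp
      simp only [this]
      rw [← Complex.ofReal_sum]
      rw [hpsum, Complex.ofReal_one]
  · exact ⟨4, p, P, Q, hpnn, hpsum, hPdens, hQdens, hσ⟩
  · -- key positivity
    have hsmul : (((2:ℝ) - l) • σ) = ∑ j : Fin 4, ((1:ℂ)/4) •
        ((ρj j) ⊗ₖ Matrix.of (fun k m => bVec s j k * star (bVec s j m))) := by
      have hreal : (((2:ℝ) - l) • σ) = (((2 - l : ℝ)) : ℂ) • σ := by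
        ext pq qq
        simp [Matrix.smul_apply, Complex.real_smul]
      rw [hreal, hσ, Finset.smul_sum]
      apply Finset.sum_congr rfl
      intro j _
      rw [hP, hQ]
      by_cases h : (ρj j).trace = 0
      · have hz : ρj j = 0 := psd_trace_zero (hρjpsd j) h
        have hτ0 : τ j = 0 := by
          have h' := (htrτ j).symm.trans h
          exact_mod_cast h'
        simp only [h, if_true, hp, hτ0]
        simp [hz, Matrix.zero_kronecker]
      · have hτne : τ j ≠ 0 := by
          intro h0; apply h; rw [htrτ j, h0, Complex.ofReal_zero]
        simp only [h, if_false]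
        have hτC : ((τ j : ℝ) : ℂ) ≠ 0 := by exact_mod_cast hτne
        have h2lC : ((2 - l : ℝ) : ℂ) ≠ 0 := by exact_mod_cast ne_of_gt h2l
        have houter : outer (bVec s j) = Matrix.of (fun k m => bVec s j k * star (bVec s j m)) := rfl
        rw [Matrix.smul_kronecker, Matrix.kronecker_smul, smul_smul, smul_smul, smul_smul]
        rw [houter]
        congr 1
        rw [hp]
        have h2lC2 : (2 - (l:ℂ)) ≠ 0 := by push_cast at h2lC; exact h2lC
        push_cast
        field_simp
    rw [hsmul, main_eq l s r hs hr hsd.symm hrd.symm n ρ]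
    have h1 : (((1 : Matrix (Fin n) (Fin n) ℂ) ⊗ₖ K1 s) * ρ *
        ((1 : Matrix (Fin n) (Fin n) ℂ) ⊗ₖ K1 s)ᴴ).PosSemidef :=
      hρ.1.mul_mul_conjTranspose_same _
    have h2 : (((1 : Matrix (Fin n) (Fin n) ℂ) ⊗ₖ K2 s) * ρ *
        ((1 : Matrix (Fin n) (Fin n) ℂ) ⊗ₖ K2 s)ᴴ).PosSemidef :=
      hρ.1.mul_mul_conjTranspose_same _
    have : idTensorFun (⇑(adChannel l)) ρ +
        ((1 : Matrix (Fin n) (Fin n) ℂ) ⊗ₖ K1 s) * ρ * ((1 : Matrix (Fin n) (Fin n) ℂ) ⊗ₖ K1 s)ᴴ +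
        ((1 : Matrix (Fin n) (Fin n) ℂ) ⊗ₖ K2 s) * ρ * ((1 : Matrix (Fin n) (Fin n) ℂ) ⊗ₖ K2 s)ᴴ -
        idTensorFun (⇑(adChannel l)) ρ =
        ((1 : Matrix (Fin n) (Fin n) ℂ) ⊗ₖ K1 s) * ρ * ((1 : Matrix (Fin n) (Fin n) ℂ) ⊗ₖ K1 s)ᴴ +
        ((1 : Matrix (Fin n) (Fin n) ℂ) ⊗ₖ K2 s) * ρ * ((1 : Matrix (Fin n) (Fin n) ℂ) ⊗ₖ K2 s)ᴴ := by
      abel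
    rw [this]
    exact h1.add h2

lemma psd_diag_nonneg' {m : Type*} [Fintype m] [DecidableEq m] {M : Matrix m m ℂ}
    (hM : M.PosSemidef) (i : m) : 0 ≤ M i i := by
  have := hM.dotProduct_mulVec_nonneg (Pi.single i 1)
  simpa [dotProduct, mulVec, Pi.single_apply] using this

/-- For a 2×2 PSD matrix, |M01|² ≤ M00 * M11 (real parts). -/
lemma psd2_offdiag {P : Matrix (Fin 2) (Fin 2) ℂ} (hP : P.PosSemidef) (htr : P.trace = 1) :
    Complex.normSq (P 0 1) ≤ (P 0 0).re * (P 1 1).re := by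
  have h10 : P 1 0 = star (P 0 1) := (hP.1.apply 1 0).symm
  have h00 : P 0 0 = ((P 0 0).re : ℂ) := by
    have h := psd_diag_nonneg' hP 0
    rw [Complex.le_def] at h
    apply Complex.ext
    · simp
    · simp [← h.2]
  have h11 : P 1 1 = ((P 1 1).re : ℂ) := by
    have h := psd_diag_nonneg' hP 1
    rw [Complex.le_def] at h
    apply Complex.ext
    · simp
    · simp [← h.2]
  set a := (P 0 0).re
  set b := (P 1 1).re
  have ha : 0 ≤ a := by
    have h := psd_diag_nonneg' hP 0; rw [Complex.le_def] at h; simpa using h.1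
  have hb : 0 ≤ b := by
    have h := psd_diag_nonneg' hP 1; rw [Complex.le_def] at h; simpa using h.1
  -- instantiate the quadratic form at x = ![P 1 1, -(star (P 0 1))]
  have hq1 := hP.dotProduct_mulVec_nonneg ![P 1 1, -(star (P 0 1))]
  have hq2 := hP.dotProduct_mulVec_nonneg ![-(P 0 1), P 0 0]
  simp only [dotProduct, mulVec, Fin.sum_univ_two, Matrix.cons_val_zero, Matrix.cons_val_one,
    Matrix.head_cons, star_neg, star_star, Pi.star_apply] at hq1 hq2
  rw [h10, h00, h11] at hq1 hq2
  rw [Complex.le_def] at hq1 hq2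
  have e1 : 0 ≤ b * (a * b - Complex.normSq (P 0 1)) := by
    have := hq1.1
    simp only [Complex.star_def, Complex.add_re, Complex.add_im, Complex.mul_re, Complex.mul_im,
      Complex.ofReal_re, Complex.ofReal_im, Complex.neg_re, Complex.neg_im, Complex.zero_re,
      Complex.conj_re, Complex.conj_im, Complex.normSq_apply] at this ⊢
    nlinarith [this]
  have e2 : 0 ≤ a * (a * b - Complex.normSq (P 0 1)) := by
    have := hq2.1
    simp only [Complex.star_def, Complex.add_re, Complex.add_im, Complex.mul_re, Complex.mul_im,
      Complex.ofReal_re, Complex.ofReal_im, Complex.neg_re, Complex.neg_im, Complex.zero_re,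
      Complex.conj_re, Complex.conj_im, Complex.normSq_apply] at this ⊢
    nlinarith [this]
  have hab : a + b = 1 := by
    have h := congrArg Complex.re htr
    simp only [Matrix.trace, Matrix.diag, Fin.sum_univ_two, Complex.add_re, Complex.one_re] at h
    exact h
  nlinarith [Complex.normSq_nonneg (P 0 1), e1, e2, ha, hb, hab]

lemma psd_diag_real {P : Matrix (Fin 2) (Fin 2) ℂ} (hP : P.PosSemidef) (i : Fin 2) :
    P i i = ((P i i).re : ℂ) := by
  have h := psd_diag_nonneg' hP i
  rw [Complex.le_def] at h
  apply Complex.ext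
  · simp
  · simp [← h.2]

set_option maxHeartbeats 1000000 in
/-- For 2×2 density matrices, `Re(∑ P a b * Q a b) ≤ 1`. -/
lemma prod_overlap_le_one {P Q : Matrix (Fin 2) (Fin 2) ℂ}
    (hP : IsDensity P) (hQ : IsDensity Q) :
    (P 0 0 * Q 0 0 + P 0 1 * Q 0 1 + P 1 0 * Q 1 0 + P 1 1 * Q 1 1).re ≤ 1 := by
  have hP10 : P 1 0 = star (P 0 1) := (hP.1.1.apply 1 0).symm
  have hQ10 : Q 1 0 = star (Q 0 1) := (hQ.1.1.apply 1 0).symm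
  have hP00 := psd_diag_real hP.1 0
  have hP11 := psd_diag_real hP.1 1
  have hQ00 := psd_diag_real hQ.1 0
  have hQ11 := psd_diag_real hQ.1 1
  set a := (P 0 0).re with hadef
  set b := (P 1 1).re with hbdef
  set c := (Q 0 0).re with hcdef
  set d := (Q 1 1).re with hddef
  have ha : 0 ≤ a := by
    have h := psd_diag_nonneg' hP.1 0; rw [Complex.le_def] at h; simpa using h.1
  have hb : 0 ≤ b := by
    have h := psd_diag_nonneg' hP.1 1; rw [Complex.le_def] at h; simpa using h.1
  have hc : 0 ≤ c := by
    have h := psd_diag_nonneg' hQ.1 0; rw [Complex.le_def] at h; simpa using h.1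
  have hd : 0 ≤ d := by
    have h := psd_diag_nonneg' hQ.1 1; rw [Complex.le_def] at h; simpa using h.1
  have hab : a + b = 1 := by
    have h := congrArg Complex.re hP.2
    simpa [Matrix.trace, Matrix.diag, Fin.sum_univ_two] using h
  have hcd : c + d = 1 := by
    have h := congrArg Complex.re hQ.2
    simpa [Matrix.trace, Matrix.diag, Fin.sum_univ_two] using h
  have hzP : Complex.normSq (P 0 1) ≤ a * b := psd2_offdiag hP.1 hP.2
  have hzQ : Complex.normSq (Q 0 1) ≤ c * d := psd2_offdiag hQ.1 hQ.2
  -- rewrite goal in terms of re/im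
  rw [hP00, hP11, hQ00, hQ11, hP10, hQ10]
  have hre : (P 0 1 * Q 0 1 + star (P 0 1) * star (Q 0 1)).re
      = 2 * ((P 0 1).re * (Q 0 1).re - (P 0 1).im * (Q 0 1).im) := by
    simp [Complex.star_def, Complex.add_re, Complex.mul_re, Complex.conj_re, Complex.conj_im]
    ring
  have goal_eq : (((a:ℝ):ℂ) * ((c:ℝ):ℂ) + P 0 1 * Q 0 1 + star (P 0 1) * star (Q 0 1)
      + ((b:ℝ):ℂ) * ((d:ℝ):ℂ)).re
      = a * c + b * d + 2 * ((P 0 1).re * (Q 0 1).re - (P 0 1).im * (Q 0 1).im) := by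
    simp [Complex.star_def, Complex.add_re, Complex.mul_re, Complex.conj_re, Complex.conj_im]
    ring
  -- final numeric inequality
  have key : 2 * ((P 0 1).re * (Q 0 1).re - (P 0 1).im * (Q 0 1).im) ≤ a * d + b * c := by
    set x1 := (P 0 1).re; set y1 := (P 0 1).im
    set x2 := (Q 0 1).re; set y2 := (Q 0 1).im
    have h1 : (x1 * x2 - y1 * y2)^2 ≤ (x1^2 + y1^2) * (x2^2 + y2^2) := by nlinarith [sq_nonneg (x1*y2 + y1*x2)]
    have h2 : (x1^2 + y1^2) * (x2^2 + y2^2) ≤ (a*b) * (c*d) := by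
      have e1 : x1^2 + y1^2 = Complex.normSq (P 0 1) := by simp [Complex.normSq_apply]; ring
      have e2 : x2^2 + y2^2 = Complex.normSq (Q 0 1) := by simp [Complex.normSq_apply]; ring
      rw [e1, e2]
      exact mul_le_mul hzP hzQ (Complex.normSq_nonneg _) (by nlinarith)
    have h3 : 4 * ((a*b)*(c*d)) ≤ (a*d + b*c)^2 := by nlinarith [sq_nonneg (a*d - b*c)]
    set m := x1*x2 - y1*y2 with hm
    have h4 : (2*m)^2 ≤ (a*d + b*c)^2 := by nlinarith [h1, h2, h3]
    have hnn : 0 ≤ a*d + b*c := by positivity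
    nlinarith [h4, hnn]
  calc (((a:ℝ):ℂ) * ((c:ℝ):ℂ) + P 0 1 * Q 0 1 + star (P 0 1) * star (Q 0 1)
      + ((b:ℝ):ℂ) * ((d:ℝ):ℂ)).re
      = a * c + b * d + 2 * ((P 0 1).re * (Q 0 1).re - (P 0 1).im * (Q 0 1).im) := goal_eq
    _ ≤ a * c + b * d + (a * d + b * c) := by linarith [key]
    _ = (a + b) * (c + d) := by ring
    _ = 1 := by rw [hab, hcd]; norm_num



def wVec : Fin 2 × Fin 2 → ℂ := fun p => if p.1 = p.2 then 1 else 0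

def Wval (M : Matrix (Fin 2 × Fin 2) (Fin 2 × Fin 2) ℂ) : ℂ :=
  M (0,0) (0,0) + M (0,0) (1,1) + M (1,1) (0,0) + M (1,1) (1,1)

lemma dot_w (M : Matrix (Fin 2 × Fin 2) (Fin 2 × Fin 2) ℂ) :
    dotProduct (star wVec) (M *ᵥ wVec) = Wval M := by
  simp [dotProduct, mulVec, wVec, Wval, Fintype.sum_prod_type, Fin.sum_univ_two]
  ring

def phiVec (l : ℝ) : Fin 2 × Fin 2 → ℂ := fun p =>
  if p = (0,0) then (((Real.sqrt (2-l))⁻¹ : ℝ) : ℂ)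
  else if p = (1,1) then ((Real.sqrt (1-l) * (Real.sqrt (2-l))⁻¹ : ℝ) : ℂ) else 0

lemma phi_density (l : ℝ) (hl : l ∈ Set.Icc (0:ℝ) 1) : IsDensity (outer (phiVec l)) := by
  have h2l : (0:ℝ) < 2 - l := by linarith [hl.2]
  have hcne : Real.sqrt (2-l) ≠ 0 := by positivity
  have hc2 : Real.sqrt (2-l) ^ 2 = 2 - l := Real.sq_sqrt (le_of_lt h2l)
  have hs2 : Real.sqrt (1-l) ^ 2 = 1 - l := Real.sq_sqrt (by linarith [hl.2])
  constructor
  · exact outer_posSemidef _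
  · have : (outer (phiVec l)).trace = ∑ p, phiVec l p * star (phiVec l p) := by
      simp [outer, Matrix.trace, Matrix.diag]
    rw [this, Fintype.sum_prod_type]
    simp only [Fin.sum_univ_two, phiVec]
    norm_num
    have hcC : ((Real.sqrt (2-l) : ℝ) : ℂ) ≠ 0 := by
      simp only [ne_eq, Complex.ofReal_eq_zero]
      positivity
    have hc2C : ((Real.sqrt (2-l) : ℝ) : ℂ)^2 = ((2:ℂ) - l) := by
      rw [← Complex.ofReal_pow, hc2]; push_cast; ring
    have hs2C : ((Real.sqrt (1-l) : ℝ) : ℂ)^2 = ((1:ℂ) - l) := by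
      rw [← Complex.ofReal_pow, hs2]; push_cast; ring
    field_simp
    linear_combination hs2C - hc2C

lemma Wval_out (l : ℝ) (hl : l ∈ Set.Icc (0:ℝ) 1) :
    Wval (idTensorFun (⇑(adChannel l)) (outer (phiVec l))) = (((2:ℝ) - l : ℝ) : ℂ) := by
  have h2l : (0:ℝ) < 2 - l := by linarith [hl.2]
  have hcne : ((Real.sqrt (2-l) : ℝ) : ℂ) ≠ 0 := by
    simp only [ne_eq, Complex.ofReal_eq_zero]
    positivity
  have hc2 : ((Real.sqrt (2-l) : ℝ) : ℂ) ^ 2 = ((2:ℂ) - l) := by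
    rw [← Complex.ofReal_pow, Real.sq_sqrt (le_of_lt h2l)]; push_cast; ring
  have hs2 : ((Real.sqrt (1-l) : ℝ) : ℂ) ^ 2 = ((1:ℂ) - l) := by
    rw [← Complex.ofReal_pow, Real.sq_sqrt (by linarith [hl.2])]; push_cast; ring
  simp only [Wval, idTensorFun, Matrix.of_apply, adChannel, krausMap2, LinearMap.coe_mk,
    AddHom.coe_mk, Matrix.add_apply, Matrix.mul_apply, Fin.sum_univ_two,
    Matrix.cons_val_zero, Matrix.cons_val_one, Matrix.head_cons, conjTranspose_apply,
    outer, phiVec]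
  norm_num
  push_cast
  field_simp
  linear_combination ((l:ℂ) - 2) * hc2 + (((Real.sqrt (1-l) : ℝ):ℂ)^2 + 3 - (l:ℂ)) * hs2



lemma lowerBound (l : ℝ) (hl : l ∈ Set.Icc (0:ℝ) 1)
    (σ : Matrix (Fin 2 × Fin 2) (Fin 2 × Fin 2) ℂ) (hsep : SepState σ) (r : ℝ)
    (hPSD : (((2:ℝ) ^ r) • σ - idTensorFun (⇑(adChannel l)) (outer (phiVec l))).PosSemidef) :
    2 - l ≤ (2:ℝ) ^ r := by
  obtain ⟨L, p, P, Q, hp, hps, hPd, hQd, hdecomp⟩ := hsep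
  have key : (0:ℂ) ≤ ((2:ℝ)^r) • Wval σ - Wval (idTensorFun (⇑(adChannel l)) (outer (phiVec l))) := by
    have h := hPSD.dotProduct_mulVec_nonneg wVec
    rwa [sub_mulVec, dotProduct_sub, smul_mulVec, dotProduct_smul, dot_w, dot_w] at h
  rw [Wval_out l hl, Complex.le_def] at key
  have key' : (2:ℝ) - l ≤ ((2:ℝ)^r) * (Wval σ).re := by
    have h1 := key.1
    simp only [Complex.sub_re, Complex.real_smul, Complex.mul_re, Complex.ofReal_re,
      Complex.ofReal_im, Complex.zero_re, zero_mul, sub_zero] at h1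
    linarith [h1]
  have hWσ : (Wval σ).re ≤ 1 := by
    have hsum : Wval σ = ∑ i, (p i : ℂ) * Wval (P i ⊗ₖ Q i) := by
      rw [hdecomp]
      simp only [Wval, Matrix.sum_apply, Matrix.smul_apply, kroneckerMap_apply, smul_eq_mul]
      rw [← Finset.sum_add_distrib, ← Finset.sum_add_distrib, ← Finset.sum_add_distrib]
      apply Finset.sum_congr rfl
      intro i _
      ring
    rw [hsum, Complex.re_sum]
    calc ∑ i, ((p i : ℂ) * Wval (P i ⊗ₖ Q i)).re
        ≤ ∑ i, p i := by
          apply Finset.sum_le_sum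
          intro i _
          have hkr : Wval (P i ⊗ₖ Q i) = P i 0 0 * Q i 0 0 + P i 0 1 * Q i 0 1
              + P i 1 0 * Q i 1 0 + P i 1 1 * Q i 1 1 := by
            simp [Wval, kroneckerMap_apply]
          have hb := prod_overlap_le_one (hPd i) (hQd i)
          rw [hkr]
          have : ((p i : ℂ) * (P i 0 0 * Q i 0 0 + P i 0 1 * Q i 0 1
              + P i 1 0 * Q i 1 0 + P i 1 1 * Q i 1 1)).re
              = p i * (P i 0 0 * Q i 0 0 + P i 0 1 * Q i 0 1
              + P i 1 0 * Q i 1 0 + P i 1 1 * Q i 1 1).re := by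
            simp [Complex.mul_re]
          rw [this]
          calc p i * (P i 0 0 * Q i 0 0 + P i 0 1 * Q i 0 1
              + P i 1 0 * Q i 1 0 + P i 1 1 * Q i 1 1).re
              ≤ p i * 1 := by
                apply mul_le_mul_of_nonneg_left hb (hp i)
            _ = p i := mul_one _
      _ = 1 := hps
  have h2r : (0:ℝ) < (2:ℝ)^r := by positivity
  calc (2:ℝ) - l ≤ ((2:ℝ)^r) * (Wval σ).re := key'
    _ ≤ ((2:ℝ)^r) * 1 := by apply mul_le_mul_of_nonneg_left hWσ (le_of_lt h2r)
    _ = (2:ℝ)^r := mul_one _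


set_option maxHeartbeats 1000000 in
/-- The max-relative entropy of entanglement of the qubit amplitude
damping channel equals `log₂(2−λ)`. -/
theorem stmt8 (l : ℝ) (hl : l ∈ Set.Icc (0:ℝ) 1) :
    EmaxChannel (adChannel l) = ((Real.logb 2 (2 - l) : ℝ) : EReal) := by
  have h2l : (0:ℝ) < 2 - l := by linarith [hl.2]
  apply le_antisymm
  · apply sSup_le
    rintro x ⟨n, hn, ρ, hρ, rfl⟩
    obtain ⟨σ, hσd, hσsep, hpsd⟩ := upperBound l hl n hn ρ hρ
    have hrpow : ((2:ℝ) ^ (Real.logb 2 (2-l))) = 2 - l :=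
      Real.rpow_logb (by norm_num) (by norm_num) h2l
    have hD : Dmax (idTensorFun (⇑(adChannel l)) ρ) σ ≤ ((Real.logb 2 (2 - l) : ℝ) : EReal) := by
      apply sInf_le
      exact ⟨Real.logb 2 (2-l), rfl, by rw [hrpow]; exact hpsd⟩
    exact le_trans (sInf_le ⟨σ, hσd, hσsep, rfl⟩) hD
  · have hmem : sInf {y : EReal | ∃ σ : Matrix (Fin 2 × Fin 2) (Fin 2 × Fin 2) ℂ,
        IsDensity σ ∧ SepState σ ∧
        y = Dmax (idTensorFun (⇑(adChannel l)) (outer (phiVec l))) σ} ∈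
        {x : EReal | ∃ n : ℕ, 0 < n ∧ ∃ ρ : Matrix (Fin n × Fin 2) (Fin n × Fin 2) ℂ,
          IsDensity ρ ∧
          x = sInf {y : EReal | ∃ σ : Matrix (Fin n × Fin 2) (Fin n × Fin 2) ℂ,
            IsDensity σ ∧ SepState σ ∧ y = Dmax (idTensorFun (⇑(adChannel l)) ρ) σ}} :=
      ⟨2, by norm_num, outer (phiVec l), phi_density l hl, rfl⟩
    refine le_trans ?_ (le_sSup hmem)
    apply le_sInf
    rintro y ⟨σ, hσd, hσsep, rfl⟩
    apply le_sInf
    rintro x ⟨r, rfl, hpsd⟩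
    rw [EReal.coe_le_coe_iff]
    rw [Real.logb_le_iff_le_rpow (by norm_num) h2l]
    exact lowerBound l hl σ hσsep r hpsd

end
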